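/- Let Q₀ : Ξ → ℝ^n and Y_Q : ℝ^n → ℝ^m be measurable, define Q : Ω → ℝ^n by Q(ξ,θ) = Q₀(ξ) and the measurement Z : Ω → ℝ^m by Z(ξ,θ) = Y_Q(Q₀(ξ)) + E(θ). Then for all Borel sets A ⊆ ℝ^n and B ⊆ ℝ^m: P(Q⁻¹(A) ∩ Z⁻¹(B)) = ∫_A (∫_B f_E(y − Y_Q(q)) dy) d((Q₀)_*P_Ξ)(q), where the inner integral is with respect to Lebesgue measure on ℝ^m. -/

import Mathlib

open MeasureTheory

/-- For the parameter `Q(ξ,θ) = Q₀(ξ)` and the measurement with additive error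
`Z(ξ,θ) = Y_Q(Q₀(ξ)) + E(θ)` on the product space, the joint probability satisfies
`P(Q⁻¹(A) ∩ Z⁻¹(B)) = ∫_A (∫_B f_E(y − Y_Q(q)) dy) d((Q₀)_*P_Ξ)(q)`. -/
theorem joint_probability_additive_error
    {Ξ Θ : Type*} [MeasurableSpace Ξ] [MeasurableSpace Θ]
    (PΞ : Measure Ξ) (PΘ : Measure Θ)
    [IsProbabilityMeasure PΞ] [IsProbabilityMeasure PΘ]
    {n m : ℕ}
    (Q₀ : Ξ → EuclideanSpace ℝ (Fin n)) (hQ₀ : Measurable Q₀)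
    (YQ : EuclideanSpace ℝ (Fin n) → EuclideanSpace ℝ (Fin m)) (hYQ : Measurable YQ)
    (E : Θ → EuclideanSpace ℝ (Fin m)) (hE : Measurable E)
    (fE : EuclideanSpace ℝ (Fin m) → ℝ) (hfEmeas : Measurable fE) (hfE0 : ∀ y, 0 ≤ fE y)
    (hfEdens : Measure.map E PΘ = volume.withDensity (fun y => ENNReal.ofReal (fE y)))
    (Q : Ξ × Θ → EuclideanSpace ℝ (Fin n)) (hQ : Q = fun p => Q₀ p.1)
    (Z : Ξ × Θ → EuclideanSpace ℝ (Fin m)) (hZ : Z = fun p => YQ (Q₀ p.1) + E p.2) :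
    ∀ (A : Set (EuclideanSpace ℝ (Fin n))) (B : Set (EuclideanSpace ℝ (Fin m))),
      MeasurableSet A → MeasurableSet B →
      (PΞ.prod PΘ) (Q ⁻¹' A ∩ Z ⁻¹' B)
        = ∫⁻ q in A, ENNReal.ofReal (∫ y in B, fE (y - YQ q)) ∂(Measure.map Q₀ PΞ) := by
  intro A B hA hB
  subst hQ hZ
  -- key: for each c, PΘ {θ | c + E θ ∈ B} = ∫⁻ y in B, ofReal (fE (y - c))
  have key : ∀ c : EuclideanSpace ℝ (Fin m),
      PΘ (E ⁻¹' {y | c + y ∈ B}) = ∫⁻ y in B, ENNReal.ofReal (fE (y - c)) := by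
    intro c
    have hS : MeasurableSet {y : EuclideanSpace ℝ (Fin m) | c + y ∈ B} :=
      (measurable_const_add c) hB
    set S : Set (EuclideanSpace ℝ (Fin m)) := {y | c + y ∈ B} with hSdef
    have h1 : PΘ (E ⁻¹' S)
        = ∫⁻ y in S, ENNReal.ofReal (fE y) ∂volume := by
      rw [← Measure.map_apply hE hS, hfEdens, withDensity_apply _ hS]
    have h2 : ∫⁻ y in B, ENNReal.ofReal (fE (y - c)) ∂volume
        = ∫⁻ y in S, ENNReal.ofReal (fE y) ∂volume := by
      have hmp : MeasurePreserving (fun y : EuclideanSpace ℝ (Fin m) => y - c)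
          volume volume := measurePreserving_sub_right volume c
      have := hmp.setLIntegral_comp_preimage hS (ENNReal.measurable_ofReal.comp hfEmeas)
      have hpre : (fun y : EuclideanSpace ℝ (Fin m) => y - c) ⁻¹' S = B := by
        ext y
        simp [hSdef, Set.mem_preimage, add_comm, sub_add_cancel]
      rw [hpre] at this
      exact this
    rw [h1, h2]
  -- the joint set
  have hset : ((fun p : Ξ × Θ => Q₀ p.1) ⁻¹' A ∩ (fun p => YQ (Q₀ p.1) + E p.2) ⁻¹' B)
      = {p : Ξ × Θ | Q₀ p.1 ∈ A ∧ E p.2 ∈ {y | YQ (Q₀ p.1) + y ∈ B}} := by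
    ext p; simp [Set.mem_inter_iff]
  have hmeasset : MeasurableSet
      ((fun p : Ξ × Θ => Q₀ p.1) ⁻¹' A ∩ (fun p => YQ (Q₀ p.1) + E p.2) ⁻¹' B) := by
    refine ((hQ₀.comp measurable_fst) hA).inter ?_
    exact (((hYQ.comp (hQ₀.comp measurable_fst)).add (hE.comp measurable_snd)) hB)
  rw [Measure.prod_apply hmeasset]
  have hsec : ∀ ξ : Ξ,
      PΘ (Prod.mk ξ ⁻¹' ((fun p : Ξ × Θ => Q₀ p.1) ⁻¹' A ∩ (fun p => YQ (Q₀ p.1) + E p.2) ⁻¹' B))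
        = A.indicator (fun q => ∫⁻ y in B, ENNReal.ofReal (fE (y - YQ q))) (Q₀ ξ) := by
    intro ξ
    by_cases hξ : Q₀ ξ ∈ A
    · have : Prod.mk ξ ⁻¹' ((fun p : Ξ × Θ => Q₀ p.1) ⁻¹' A ∩
          (fun p => YQ (Q₀ p.1) + E p.2) ⁻¹' B) = E ⁻¹' {y | YQ (Q₀ ξ) + y ∈ B} := by
        ext θ; simp [hξ]
      rw [this, key, Set.indicator_of_mem hξ]
    · have : Prod.mk ξ ⁻¹' ((fun p : Ξ × Θ => Q₀ p.1) ⁻¹' A ∩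
          (fun p => YQ (Q₀ p.1) + E p.2) ⁻¹' B) = ∅ := by
        ext θ; simp [hξ]
      rw [this, Set.indicator_of_notMem hξ]
      simp
  simp_rw [hsec]
  have hmg : Measurable fun c : EuclideanSpace ℝ (Fin m) =>
      ∫⁻ y in B, ENNReal.ofReal (fE (y - c)) := by
    have heq : (fun c : EuclideanSpace ℝ (Fin m) => ∫⁻ y in B, ENNReal.ofReal (fE (y - c)))
        = fun c => ∫⁻ y, B.indicator (fun y => ENNReal.ofReal (fE (y - c))) y := by
      funext c; rw [lintegral_indicator hB]
    rw [heq]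
    apply Measurable.lintegral_prod_right'
      (f := fun p : EuclideanSpace ℝ (Fin m) × EuclideanSpace ℝ (Fin m) =>
        B.indicator (fun y => ENNReal.ofReal (fE (y - p.1))) p.2)
    have : (fun p : EuclideanSpace ℝ (Fin m) × EuclideanSpace ℝ (Fin m) =>
        B.indicator (fun y => ENNReal.ofReal (fE (y - p.1))) p.2)
        = (Set.univ ×ˢ B).indicator
          (fun p : EuclideanSpace ℝ (Fin m) × EuclideanSpace ℝ (Fin m) =>
            ENNReal.ofReal (fE (p.2 - p.1))) := by
      funext p
      by_cases hp : p.2 ∈ B <;>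
        simp [Set.indicator, hp]
    rw [this]
    exact ((ENNReal.measurable_ofReal.comp
      (hfEmeas.comp (measurable_snd.sub measurable_fst))).indicator
      (MeasurableSet.univ.prod hB))
  have hmg' : Measurable fun q => ∫⁻ y in B, ENNReal.ofReal (fE (y - YQ q)) :=
    hmg.comp hYQ
  rw [← lintegral_map (f := A.indicator fun q => ∫⁻ y in B, ENNReal.ofReal (fE (y - YQ q)))
      (hmg'.indicator hA) hQ₀]
  rw [lintegral_indicator hA]
  refine setLIntegral_congr_fun hA (fun q _ => ?_)
  -- ∫⁻ y in B, ofReal (fE (y - YQ q)) = ofReal (∫ y in B, fE (y - YQ q))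
  have hmeasg : Measurable fun y => fE (y - YQ q) :=
    hfEmeas.comp (measurable_id.sub measurable_const)
  have hfin : (∫⁻ y in B, ENNReal.ofReal (fE (y - YQ q)) ∂volume) < ⊤ := by
    rw [← key (YQ q)]
    exact lt_of_le_of_lt (measure_mono (Set.subset_univ _)) (measure_lt_top PΘ _)
  have hint : IntegrableOn (fun y => fE (y - YQ q)) B volume := by
    constructor
    · exact hmeasg.aestronglyMeasurable
    · rw [HasFiniteIntegral]
      calc ∫⁻ y in B, ‖fE (y - YQ q)‖ₑ ∂volume
          = ∫⁻ y in B, ENNReal.ofReal (fE (y - YQ q)) ∂volume := by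
            refine lintegral_congr fun y => ?_
            rw [Real.enorm_eq_ofReal (hfE0 _)]
        _ < ⊤ := hfin
  rw [← ofReal_integral_eq_lintegral_ofReal hint
    (Filter.Eventually.of_forall fun y => hfE0 _)]
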